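/- (Newton's generalized binomial theorem.) For every real number a and every real number x with |x| < 1, the series ∑_{n=0}^∞ C(a,n)·x^n converges and its sum equals (1 + x)^a, where the power is the real power function. -/

import Mathlib

open Filter Set

private lemma newton_choose_rec (a : ℝ) (n : ℕ) :
    (n + 1 : ℝ) * Ring.choose a (n + 1) = (a - n) * Ring.choose a n := by
  have h1 := Ring.descPochhammer_eq_factorial_smul_choose (R := ℝ) a (n+1)
  have h2 := Ring.descPochhammer_eq_factorial_smul_choose (R := ℝ) a n
  have h3 : (descPochhammer ℤ (n+1)).smeval a = (descPochhammer ℤ n).smeval a * (a - n) := by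
    rw [descPochhammer_succ_right, Polynomial.smeval_mul]
    congr 1
    simp [Polynomial.smeval_sub, Polynomial.smeval_X, Polynomial.smeval_natCast]
  rw [h1, h2, nsmul_eq_mul, nsmul_eq_mul, Nat.factorial_succ] at h3
  have hfac : (0:ℝ) < n.factorial := by positivity
  push_cast at h3
  nlinarith [h3]

private lemma newton_summable_aux (a : ℝ) {r ρ : ℝ} (hr0 : 0 ≤ r) (hρ : ρ < 1) (hrρ : r < ρ) :
    Summable (fun n : ℕ => (n + 1 : ℝ) * |Ring.choose a (n + 1)| * r ^ n) := by
  apply summable_of_ratio_norm_eventually_le hρ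
  have hN : ∀ᶠ n : ℕ in atTop, r * |a| ≤ (ρ - r) * (n + 1) := by
    have h1 : Tendsto (fun n : ℕ => ((n : ℝ) + 1)) atTop atTop :=
      tendsto_natCast_atTop_atTop.atTop_add tendsto_const_nhds
    have h2 : Tendsto (fun n : ℕ => (ρ - r) * ((n : ℝ) + 1)) atTop atTop :=
      h1.const_mul_atTop (by linarith)
    exact h2.eventually_ge_atTop _
  filter_upwards [hN] with n hn
  have hterm : ∀ m : ℕ, ‖(m + 1 : ℝ) * |Ring.choose a (m + 1)| * r ^ m‖ =
      (m + 1 : ℝ) * |Ring.choose a (m + 1)| * r ^ m := fun m =>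
    abs_of_nonneg (by positivity)
  rw [hterm, hterm]
  set A := |Ring.choose a (n + 1)| with hA
  set B := |Ring.choose a (n + 1 + 1)| with hB
  have hA0 : 0 ≤ A := abs_nonneg _
  have hB0 : 0 ≤ B := abs_nonneg _
  have habs : ((n:ℝ) + 2) * B = |a - ((n:ℝ) + 1)| * A := by
    have h := congrArg abs (newton_choose_rec a (n+1))
    rw [abs_mul, abs_mul] at h
    have hpos : |(↑(n+1) : ℝ) + 1| = (↑(n+1) : ℝ) + 1 := abs_of_nonneg (by positivity)
    rw [hpos] at h
    rw [hA, hB]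
    push_cast at h ⊢
    linarith [h]
  have htri : |a - ((n:ℝ) + 1)| ≤ |a| + ((n:ℝ) + 1) := by
    have h5 : |((n:ℝ) + 1)| = (n:ℝ) + 1 := abs_of_nonneg (by positivity)
    calc |a - ((n:ℝ) + 1)| ≤ |a| + |((n:ℝ) + 1)| := abs_sub _ _
      _ = |a| + ((n:ℝ) + 1) := by rw [h5]
  have key : ((n:ℝ) + 2) * B * r ≤ ρ * (((n:ℝ) + 1) * A) := by
    have step1 : ((n:ℝ) + 2) * B * r ≤ (|a| + ((n:ℝ) + 1)) * A * r := by
      rw [habs]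
      exact mul_le_mul_of_nonneg_right (mul_le_mul_of_nonneg_right htri hA0) hr0
    have step2 : (|a| + ((n:ℝ) + 1)) * r ≤ ρ * ((n:ℝ) + 1) := by nlinarith [abs_nonneg a]
    calc ((n:ℝ) + 2) * B * r ≤ (|a| + ((n:ℝ) + 1)) * A * r := step1
      _ = ((|a| + ((n:ℝ) + 1)) * r) * A := by ring
      _ ≤ (ρ * ((n:ℝ) + 1)) * A := mul_le_mul_of_nonneg_right step2 hA0
      _ = ρ * (((n:ℝ) + 1) * A) := by ring
  push_cast
  calc ((n:ℝ) + 1 + 1) * B * r ^ (n + 1) = (((n:ℝ) + 2) * B * r) * r ^ n := by ring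
    _ ≤ (ρ * (((n:ℝ) + 1) * A)) * r ^ n := mul_le_mul_of_nonneg_right key (by positivity)
    _ = ρ * (((n:ℝ) + 1) * A * r ^ n) := by ring

/-- Newton's generalized binomial theorem: for |x| < 1 the binomial series
∑ C(a,n) xⁿ sums to (1+x)^a. -/
theorem newton_binomial_series (a x : ℝ) (hx : |x| < 1) :
    HasSum (fun n : ℕ => Ring.choose a n * x ^ n) ((1 + x) ^ a) := by
  have hx0 : (0:ℝ) ≤ |x| := abs_nonneg x
  set c : ℕ → ℝ := fun n => Ring.choose a n with hc
  set r : ℝ := (1 + |x|) / 2 with hrdef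
  have hr0 : 0 < r := by positivity
  have hr1 : r < 1 := by rw [hrdef]; linarith
  have hxr : |x| < r := by rw [hrdef]; linarith
  have hrρ : r < (1 + r) / 2 := by linarith
  have hρ1 : (1 + r) / 2 < 1 := by linarith
  -- summable bound on derivatives
  have hu : Summable (fun n : ℕ => (n + 1 : ℝ) * |c (n + 1)| * r ^ n) :=
    newton_summable_aux a hr0.le hρ1 hrρ
  set u : ℕ → ℝ := fun n => (n : ℝ) * |c n| * r ^ (n - 1) with hudef
  have hu' : Summable u := by
    rw [← summable_nat_add_iff 1]
    refine hu.congr fun n => ?_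
    simp only [hudef, Nat.add_sub_cancel]
    push_cast
    ring
  -- setup
  set t : Set ℝ := Ioo (-r) r with htdef
  have ht : IsOpen t := isOpen_Ioo
  have h't : IsPreconnected t := (convex_Ioo _ _).isPreconnected
  have hxt : x ∈ t := by
    rw [htdef, mem_Ioo]
    constructor <;> [linarith [neg_abs_le x]; linarith [le_abs_self x]]
  have h0t : (0:ℝ) ∈ t := by rw [htdef, mem_Ioo]; constructor <;> linarith
  set g : ℕ → ℝ → ℝ := fun n y => c n * y ^ n with hgdef
  set g' : ℕ → ℝ → ℝ := fun n y => c n * ((n : ℝ) * y ^ (n - 1)) with hg'def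
  have hderiv : ∀ n y, HasDerivAt (g n) (g' n y) y := fun n y =>
    (hasDerivAt_pow n y).const_mul (c n)
  have hbound : ∀ n y, y ∈ t → ‖g' n y‖ ≤ u n := by
    intro n y hy
    have hyr : |y| ≤ r := by
      rw [htdef, mem_Ioo] at hy
      exact (abs_lt.mpr hy).le
    simp only [hg'def, hudef, Real.norm_eq_abs, abs_mul,
      abs_of_nonneg (Nat.cast_nonneg (α := ℝ) n), abs_pow]
    calc |c n| * ((n:ℝ) * |y| ^ (n-1)) ≤ |c n| * ((n:ℝ) * r ^ (n-1)) := by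
          apply mul_le_mul_of_nonneg_left _ (abs_nonneg _)
          exact mul_le_mul_of_nonneg_left (pow_le_pow_left₀ (abs_nonneg y) hyr _)
            (Nat.cast_nonneg n)
      _ = (n:ℝ) * |c n| * r ^ (n-1) := by ring
  have hg0 : Summable (fun n => g n 0) := by
    apply summable_of_ne_finset_zero (s := {0})
    intro n hn
    simp only [Finset.mem_singleton] at hn
    simp [hgdef, zero_pow hn]
  -- sum function and its derivative
  set S : ℝ → ℝ := fun y => ∑' n, g n y with hSdef
  have hsum : ∀ y ∈ t, Summable (fun n => g n y) := fun y hy =>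
    summable_of_summable_hasDerivAt_of_isPreconnected hu' ht h't
      (fun n y _ => hderiv n y) hbound h0t hg0 hy
  have hS' : ∀ y ∈ t, HasDerivAt S (∑' n, g' n y) y := fun y hy =>
    hasDerivAt_tsum_of_isPreconnected hu' ht h't (fun n y _ => hderiv n y)
      hbound h0t hg0 hy
  set D : ℝ → ℝ := fun y => ∑' n, g' n y with hDdef
  -- the ODE
  have hODE : ∀ y ∈ t, (1 + y) * D y = a * S y := by
    intro y hy
    have hSsum : HasSum (fun n => g n y) (S y) := (hsum y hy).hasSum
    have hDsum : HasSum (fun n => g' n y) (D y) :=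
      (Summable.of_norm_bounded hu' (fun n => hbound n y hy)).hasSum
    have hD1 : HasSum (fun n : ℕ => (n + 1 : ℝ) * c (n + 1) * y ^ n) (D y) := by
      have h0 : g' 0 y = 0 := by simp [hg'def]
      have h := (hasSum_nat_add_iff' (f := fun n => g' n y) 1).mpr hDsum
      simp only [Finset.range_one, Finset.sum_singleton, h0, sub_zero] at h
      refine h.congr_fun fun n => ?_
      simp only [hg'def, Nat.add_sub_cancel]
      push_cast
      ring
    have hT : HasSum (fun n : ℕ => (n : ℝ) * c n * y ^ n) (y * D y) := by
      refine (hDsum.mul_left y).congr_fun fun n => ?_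
      cases n with
      | zero => simp [hg'def]
      | succ m =>
        simp only [hg'def, Nat.add_sub_cancel]
        push_cast
        rw [pow_succ]
        ring
    have haS : HasSum (fun n : ℕ => a * c n * y ^ n) (a * S y) := by
      refine (hSsum.mul_left a).congr_fun fun n => ?_
      simp only [hgdef]; ring
    have hsub : HasSum (fun n : ℕ => (a - n) * c n * y ^ n) (a * S y - y * D y) := by
      refine (haS.sub hT).congr_fun fun n => ?_
      ring
    have heq : (fun n : ℕ => (a - n) * c n * y ^ n) =
        (fun n : ℕ => (n + 1 : ℝ) * c (n + 1) * y ^ n) := by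
      funext n
      rw [← newton_choose_rec a n]
    rw [heq] at hsub
    have := hD1.unique hsub
    linarith [this]
  -- F = S(y) * (1+y)^(-a) has zero derivative on t
  have hpos : ∀ y ∈ t, (0:ℝ) < 1 + y := by
    intro y hy
    rw [htdef, mem_Ioo] at hy
    linarith [hy.1]
  set F : ℝ → ℝ := fun y => S y * (1 + y) ^ (-a) with hFdef
  have hF' : ∀ y ∈ t, HasDerivAt F 0 y := by
    intro y hy
    have h1y := hpos y hy
    have hw : HasDerivAt (fun z : ℝ => (1 + z) ^ (-a)) (1 * (-a) * (1 + y) ^ (-a - 1)) y :=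
      (HasDerivAt.const_add 1 (hasDerivAt_id y)).rpow_const (Or.inl h1y.ne')
    have hF := (hS' y hy).mul hw
    have hsplit : (1 + y) ^ (-a) = (1 + y) ^ (-a - 1) * (1 + y) := by
      rw [← Real.rpow_add_one h1y.ne' (-a - 1)]
      norm_num
    have hzero : D y * (1 + y) ^ (-a) + S y * (1 * -a * (1 + y) ^ (-a - 1)) = 0 := by
      rw [hsplit]
      linear_combination ((1 + y) ^ (-a - 1)) * hODE y hy
    rw [← hzero]
    exact hF
  -- F is constant on t
  have hconst : F x = F 0 := by
    have hdiff : DifferentiableOn ℝ F t := fun y hy =>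
      ((hF' y hy).differentiableAt).differentiableWithinAt
    apply (convex_Ioo (-r) r).is_const_of_fderivWithin_eq_zero hdiff _ hxt h0t
    intro y hy
    rw [fderivWithin_of_isOpen ht hy]
    rw [(hF' y hy).hasFDerivAt.fderiv]
    ext
    simp
  -- compute F 0
  have hS0 : S 0 = 1 := by
    show (∑' n, g n 0) = 1
    rw [tsum_eq_single 0]
    · simp [hgdef, hc]
    · intro n hn
      simp [hgdef, zero_pow hn]
  have hF0 : F 0 = 1 := by
    show S 0 * (1 + 0 : ℝ) ^ (-a) = 1
    rw [hS0]
    norm_num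
  -- conclude
  have hxpos : (0:ℝ) < 1 + x := hpos x hxt
  have hFx : S x * (1 + x) ^ (-a) = 1 := hconst.trans hF0
  have hSx : S x = (1 + x) ^ a := by
    have hne : (0:ℝ) < (1 + x) ^ (-a) := Real.rpow_pos_of_pos hxpos _
    have hmul : (1 + x) ^ (-a) * (1 + x) ^ a = 1 := by
      rw [← Real.rpow_add hxpos]
      simp
    nlinarith [hFx, hmul]
  have hfin := (hsum x hxt).hasSum
  rw [show (∑' n, g n x) = S x from rfl, hSx] at hfin
  exact hfin
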